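/- Let p > 1 and a_p ≤ ω < ω_p, where ω_p = p/(p+1)² and a_p = p(7p−5)/(4(p+1)(2p−1)²). Then the function G(u) = f(u)/(u−β) is nonincreasing on the open interval (β, c) (hypothesis (H3)), where β = ((p/(p+1))·(1−√(1−(p+1)²ω/p)))^{1/(p−1)} and c = ((1+√(1−4ω))/2)^{1/(p−1)}. -/

import Mathlib

open Real Set Filter Topology

set_option maxHeartbeats 1000000 in
/-- For `p > 1` and `a_p ≤ ω < ω_p`: `G(u) = f(u)/(u - β)` is nonincreasing on `(β, c)` (H3). -/
theorem G_antitoneOn (p ω : ℝ) (hp : 1 < p)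
    (hω₁ : p * (7 * p - 5) / (4 * (p + 1) * (2 * p - 1) ^ 2) ≤ ω)
    (hω₂ : ω < p / (p + 1) ^ 2)
    (f : ℝ → ℝ)
    (hf : ∀ u > (0 : ℝ), f u = -ω * u + u ^ p - u ^ (2 * p - 1))
    (β c : ℝ)
    (hβ : β = (p / (p + 1) * (1 - Real.sqrt (1 - (p + 1) ^ 2 * ω / p))) ^ (1 / (p - 1)))
    (hc : c = ((1 + Real.sqrt (1 - 4 * ω)) / 2) ^ (1 / (p - 1))) :
    AntitoneOn (fun u => f u / (u - β)) (Set.Ioo β c) := by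
  have hp0 : (0:ℝ) < p := by linarith
  have hp1 : (0:ℝ) < p - 1 := by linarith
  have h2p1 : (0:ℝ) < 2*p - 1 := by linarith
  have hden : (0:ℝ) < 4*(p+1)*(2*p-1)^2 :=
    mul_pos (by linarith) (pow_pos h2p1 2)
  have hω0 : 0 < ω :=
    lt_of_lt_of_le (div_pos (mul_pos hp0 (by linarith)) hden) hω₁
  have hX : 0 < 1 - (p+1)^2*ω/p := by
    have h1 : ω*(p+1)^2 < p := (lt_div_iff₀ (by positivity)).mp hω₂
    rw [sub_pos, div_lt_one hp0]; nlinarith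
  have hD0 : 0 ≤ Real.sqrt (1 - (p + 1) ^ 2 * ω / p) := Real.sqrt_nonneg _
  set D := Real.sqrt (1 - (p + 1) ^ 2 * ω / p) with hDdef
  have hDsq : D^2 = 1 - (p+1)^2*ω/p := Real.sq_sqrt hX.le
  have hq : 0 < (p+1)^2*ω/p := div_pos (mul_pos (by positivity) hω0) hp0
  have hD1 : D < 1 := by nlinarith
  set B := p / (p + 1) * (1 - D) with hBdef
  have hB0 : 0 < B := mul_pos (div_pos hp0 (by linarith)) (by linarith)
  have hω₁' : p*(7*p-5) ≤ ω*(4*(p+1)*(2*p-1)^2) := (div_le_iff₀ hden).mp hω₁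
  have hpW : D^2 * p = p - (p+1)^2*ω := by
    rw [hDsq, sub_mul, one_mul, div_mul_cancel₀ _ hp0.ne']
  have hDle : 2*(2*p-1)*D ≤ 3*(p-1) := by
    have hsq : (2*(2*p-1)*D)^2 ≤ (3*(p-1))^2 := by nlinarith [hpW, hω₁', hp0, hp]
    nlinarith [hsq, hD0, hp, h2p1]
  have hBp1 : B*(p+1) = p*(1-D) := by rw [hBdef]; field_simp
  have hBt : p/(2*(2*p-1)) ≤ B := by
    rw [div_le_iff₀ (by linarith : (0:ℝ) < 2*(2*p-1))]
    nlinarith [mul_le_mul_of_nonneg_left hDle hp0.le, hBp1, hp]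
  have hωeq : ω = p*(1-D^2)/(p+1)^2 := by
    rw [hDsq]; field_simp; ring
  have hBquad : -ω + B - B^2 = p*(p-1)*(D*(1-D))/(p+1)^2 := by
    rw [hωeq, hBdef]; field_simp; ring
  have hfβ : 0 ≤ -ω + B - B^2 := by
    rw [hBquad]
    apply div_nonneg _ (by positivity)
    exact mul_nonneg (mul_nonneg (by positivity) hp1.le)
      (mul_nonneg hD0 (by linarith))
  -- β facts
  have hβB : β^(p-1) = B := by
    rw [hβ, ← Real.rpow_mul hB0.le, one_div, inv_mul_cancel₀ hp1.ne', Real.rpow_one]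
  have hβ0 : 0 < β := by rw [hβ]; exact Real.rpow_pos_of_pos hB0 _
  -- derivative machinery
  have hNder : ∀ u : ℝ, 0 < u → HasDerivAt (fun x : ℝ => -ω*x + x^p - x^(2*p-1))
      (-ω + p*u^(p-1) - (2*p-1)*u^(2*p-2)) u := by
    intro u hu
    have h1 : HasDerivAt (fun x:ℝ => x^p) (p*u^(p-1)) u :=
      Real.hasDerivAt_rpow_const (Or.inl hu.ne')
    have h2 : HasDerivAt (fun x:ℝ => x^(2*p-1)) ((2*p-1)*u^(2*p-1-1)) u :=
      Real.hasDerivAt_rpow_const (Or.inl hu.ne')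
    have h0 : HasDerivAt (fun x:ℝ => -ω*x) (-ω) u := by
      simpa using (hasDerivAt_id u).const_mul (-ω)
    have := (h0.add h1).sub h2
    exact this.congr_deriv (by rw [show 2*p-1-1 = 2*p-2 by ring])
  have hN'der : ∀ u : ℝ, 0 < u → HasDerivAt (fun x : ℝ => -ω + p*x^(p-1) - (2*p-1)*x^(2*p-2))
      (p*(p-1)*u^(p-2) - (2*p-1)*(2*p-2)*u^(2*p-3)) u := by
    intro u hu
    have h1 : HasDerivAt (fun x:ℝ => x^(p-1)) ((p-1)*u^(p-1-1)) u :=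
      Real.hasDerivAt_rpow_const (Or.inl hu.ne')
    have h2 : HasDerivAt (fun x:ℝ => x^(2*p-2)) ((2*p-2)*u^(2*p-2-1)) u :=
      Real.hasDerivAt_rpow_const (Or.inl hu.ne')
    have := ((hasDerivAt_const u (-ω)).add (h1.const_mul p)).sub (h2.const_mul (2*p-1))
    exact this.congr_deriv (by rw [show p-1-1 = p-2 by ring, show 2*p-2-1 = 2*p-3 by ring]; ring)
  have hhder : ∀ u : ℝ, 0 < u → HasDerivAt
      (fun x : ℝ => (-ω + p*x^(p-1) - (2*p-1)*x^(2*p-2))*(x-β) - (-ω*x + x^p - x^(2*p-1)))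
      ((p*(p-1)*u^(p-2) - (2*p-1)*(2*p-2)*u^(2*p-3))*(u-β)) u := by
    intro u hu
    have := ((hN'der u hu).mul ((hasDerivAt_id u).sub_const β)).sub (hNder u hu)
    exact this.congr_deriv (by simp only [id_eq]; ring)
  -- second derivative sign
  have hN''le : ∀ u : ℝ, β ≤ u → p*(p-1)*u^(p-2) - (2*p-1)*(2*p-2)*u^(2*p-3) ≤ 0 := by
    intro u hu
    have hu0 : 0 < u := lt_of_lt_of_le hβ0 hu
    have ht : p/(2*(2*p-1)) ≤ u^(p-1) := by
      refine le_trans hBt ?_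
      rw [← hβB]
      exact Real.rpow_le_rpow hβ0.le hu (by linarith)
    have hsplit : u^(2*p-3) = u^(p-2) * u^(p-1) := by
      rw [← Real.rpow_add hu0]; ring_nf
    rw [hsplit]
    have hup : 0 < u^(p-2) := Real.rpow_pos_of_pos hu0 _
    have hco : p*(p-1) ≤ (2*p-1)*(2*p-2)*u^(p-1) := by
      calc p*(p-1) = (2*p-1)*(2*p-2)*(p/(2*(2*p-1))) := by rw [eq_comm, mul_div_assoc', div_eq_iff (mul_pos two_pos h2p1).ne']; ring
        _ ≤ (2*p-1)*(2*p-2)*u^(p-1) :=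
            mul_le_mul_of_nonneg_left ht (by nlinarith)
    nlinarith [hup, hco]
  -- h := f'(u)(u-β) - f(u) is antitone on Ici β
  have hhanti : AntitoneOn
      (fun x : ℝ => (-ω + p*x^(p-1) - (2*p-1)*x^(2*p-2))*(x-β) - (-ω*x + x^p - x^(2*p-1)))
      (Ici β) := by
    apply antitoneOn_of_deriv_nonpos (convex_Ici β)
    · exact fun u hu => ((hhder u (lt_of_lt_of_le hβ0 hu)).continuousAt).continuousWithinAt
    · rw [interior_Ici]
      exact fun u hu => ((hhder u (lt_trans hβ0 hu)).differentiableAt).differentiableWithinAt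
    · rw [interior_Ici]
      intro u hu
      rw [(hhder u (lt_trans hβ0 hu)).deriv]
      exact mul_nonpos_of_nonpos_of_nonneg (hN''le u (le_of_lt hu)) (by simp at hu; linarith)
  have hhβ : (-ω + p*β^(p-1) - (2*p-1)*β^(2*p-2))*(β-β) - (-ω*β + β^p - β^(2*p-1)) ≤ 0 := by
    have hβp : β^p = β * B := by
      rw [show p = 1 + (p-1) by ring, Real.rpow_add hβ0, Real.rpow_one, hβB]
    have hβ2p : β^(2*p-1) = β * B * B := by
      rw [show 2*p-1 = 1 + (p-1) + (p-1) by ring, Real.rpow_add hβ0, Real.rpow_add hβ0,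
        Real.rpow_one, hβB]
    have hkey : 0 ≤ β * (-ω + B - B^2) := mul_nonneg hβ0.le hfβ
    rw [hβp, hβ2p]
    nlinarith [hkey]
  -- numerator nonpositivity on Ioo
  have hnum : ∀ u ∈ Ioo β c,
      (-ω + p*u^(p-1) - (2*p-1)*u^(2*p-2))*(u-β) - (-ω*u + u^p - u^(2*p-1)) ≤ 0 := by
    intro u hu
    have := hhanti self_mem_Ici (mem_Ici.mpr hu.1.le) hu.1.le
    exact le_trans this hhβ
  -- the explicit function is antitone
  have ganti : AntitoneOn (fun u : ℝ => (-ω*u + u^p - u^(2*p-1))/(u-β)) (Ioo β c) := by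
    apply antitoneOn_of_deriv_nonpos (convex_Ioo β c)
    · intro u hu
      have hu0 : 0 < u := lt_trans hβ0 hu.1
      have hne : u - β ≠ 0 := sub_ne_zero.mpr (ne_of_gt hu.1)
      exact (((hNder u hu0).div ((hasDerivAt_id u).sub_const β) hne).continuousAt).continuousWithinAt
    · rw [interior_Ioo]
      intro u hu
      have hu0 : 0 < u := lt_trans hβ0 hu.1
      have hne : u - β ≠ 0 := sub_ne_zero.mpr (ne_of_gt hu.1)
      exact (((hNder u hu0).div ((hasDerivAt_id u).sub_const β) hne).differentiableAt).differentiableWithinAt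
    · rw [interior_Ioo]
      intro u hu
      have hu0 : 0 < u := lt_trans hβ0 hu.1
      have hne : u - β ≠ 0 := sub_ne_zero.mpr (ne_of_gt hu.1)
      have hd : HasDerivAt (fun y : ℝ => (-ω*y + y^p - y^(2*p-1))/(y - β))
          (((-ω + p*u^(p-1) - (2*p-1)*u^(2*p-2))*(u-β) - (-ω*u + u^p - u^(2*p-1))*1)/(u-β)^2) u :=
        (hNder u hu0).div ((hasDerivAt_id u).sub_const β) hne
      rw [hd.deriv]
      apply div_nonpos_of_nonpos_of_nonneg _ (sq_nonneg _)
      nlinarith [hnum u hu]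
  -- transfer to f
  intro a ha b hb hab
  have ha0 : 0 < a := lt_trans hβ0 ha.1
  have hb0 : 0 < b := lt_trans hβ0 hb.1
  simp only
  rw [hf a ha0, hf b hb0]
  exact ganti ha hb hab
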